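/- arXiv:2202.07793 — 3 statements merged into one kernel-verified Lean document; each statement's English description precedes it below -/
import Mathlib

section
/- Let G be a graph and e = {u,v} a fill of G. If T is a tree-decomposition of G such that for every pair of adjacent nodes i, j of T, the separator X_i ∩ X_j does not separate u from v in G, then T (with the same bags) is also a tree-decomposition of G + e, and hence tw(G + e) ≤ width(T). -/
open SimpleGraph

/-- A tree-decomposition of `G`: a tree `T` with bags satisfying the
vertex-cover, edge-cover and connectivity (running intersection) conditions. -/
def IsTreeDecomp {V ι : Type} (G : SimpleGraph V) (T : SimpleGraph ι) (bag : ι → Set V) : Prop :=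
  T.Connected ∧ T.IsAcyclic ∧
  (∀ v : V, ∃ i, v ∈ bag i) ∧
  (∀ u v : V, G.Adj u v → ∃ i, u ∈ bag i ∧ v ∈ bag i) ∧
  (∀ v : V, (T.induce {i | v ∈ bag i}).Connected)

/-- Treewidth: the least `k` such that `G` has a tree-decomposition all of whose
bags have at most `k + 1` vertices. -/
noncomputable def tw {V : Type} (G : SimpleGraph V) : ℕ :=
  sInf {k | ∃ (ι : Type) (T : SimpleGraph ι) (bag : ι → Set V),
    IsTreeDecomp G T bag ∧ ∀ i, (bag i).ncard ≤ k + 1}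

/-- `S` separates `u` from `v` in `G`: both are outside `S` and every walk meets `S`. -/
def Separates {V : Type} (G : SimpleGraph V) (S : Set V) (u v : V) : Prop :=
  u ∉ S ∧ v ∉ S ∧ ∀ p : G.Walk u v, ∃ x ∈ p.support, x ∈ S

/-- A minimal separator: a minimal `a`–`b` separator for some `a`, `b`. -/
def IsMinSeparator {V : Type} (G : SimpleGraph V) (S : Set V) : Prop :=
  ∃ a b, Separates G S a b ∧ ∀ S' ⊂ S, ¬ Separates G S' a b

/-- Contraction of `G` by (the edge set of) `F`: vertices are the connected
components of `F`; two distinct components are adjacent iff some vertex of one is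
`G`-adjacent to some vertex of the other. -/
def contractBy {V : Type} (G F : SimpleGraph V) : SimpleGraph F.ConnectedComponent where
  Adj C D := C ≠ D ∧ ∃ u v : V,
    F.connectedComponentMk u = C ∧ F.connectedComponentMk v = D ∧ G.Adj u v
  symm := by constructor; rintro C D ⟨h, u, v, hu, hv, huv⟩; exact ⟨h.symm, v, u, hv, hu, huv.symm⟩
  loopless := by constructor; rintro C ⟨h, -⟩; exact h rfl

/-- `G` with the extra edge `{u, v}` added. -/
def addEdge {V : Type} (G : SimpleGraph V) (u v : V) : SimpleGraph V :=
  G ⊔ fromEdgeSet {s(u, v)}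

/-- `H` is a minor of `G`: disjoint nonempty connected branch sets in `G`,
one for each vertex of `H`, with edges of `H` realized between branch sets. -/
def IsMinorOf {W V : Type} (H : SimpleGraph W) (G : SimpleGraph V) : Prop :=
  ∃ B : W → Set V,
    (∀ w, (B w).Nonempty) ∧
    (∀ w, (G.induce (B w)).Connected) ∧
    (∀ w₁ w₂, w₁ ≠ w₂ → Disjoint (B w₁) (B w₂)) ∧
    (∀ w₁ w₂, H.Adj w₁ w₂ → ∃ u ∈ B w₁, ∃ v ∈ B w₂, G.Adj u v)

/-- Chordality: every cycle of length at least 4 has a chord. -/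
def IsChordal {V : Type} (H : SimpleGraph V) : Prop :=
  ∀ ⦃v : V⦄ (c : H.Walk v v), c.IsCycle → 4 ≤ c.length →
    ∃ x y, x ∈ c.support ∧ y ∈ c.support ∧ H.Adj x y ∧ s(x, y) ∉ c.edges

/-- `H` is a minimal triangulation of `G`. -/
def IsMinimalTriangulation {V : Type} (G H : SimpleGraph V) : Prop :=
  IsChordal H ∧ G ≤ H ∧ ∀ H' : SimpleGraph V, IsChordal H' → G ≤ H' → H' ≤ H → H' = H

/-- `X` is a maximal clique of `H`. -/
def IsMaximalClique {V : Type} (H : SimpleGraph V) (X : Set V) : Prop :=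
  H.IsClique X ∧ ∀ Y, H.IsClique Y → X ⊆ Y → X = Y

/-- `X` is a potential maximal clique of `G`. -/
def IsPMC {V : Type} (G : SimpleGraph V) (X : Set V) : Prop :=
  ∃ H, IsMinimalTriangulation G H ∧ IsMaximalClique H X

/-- The vertex set of the component `C` of `G \ S`. -/
def compSet {V : Type} (G : SimpleGraph V) (S : Set V)
    (C : (G.induce Sᶜ).ConnectedComponent) : Set V :=
  {v : V | ∃ h : v ∈ Sᶜ, (G.induce Sᶜ).connectedComponentMk ⟨v, h⟩ = C}

/-- The open neighborhood of a vertex set `W` in `G`. -/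
def nbhdSet {V : Type} (G : SimpleGraph V) (W : Set V) : Set V :=
  {v | v ∉ W ∧ ∃ u ∈ W, G.Adj u v}

/-- The induced subgraph on `U` with `S` completed into a clique. -/
def completedOn {V : Type} (G : SimpleGraph V) (U S : Set V) : SimpleGraph U where
  Adj a b := a ≠ b ∧ (G.Adj (a : V) (b : V) ∨ ((a : V) ∈ S ∧ (b : V) ∈ S))
  symm := by
    constructor
    rintro a b ⟨h1, h2⟩
    refine ⟨h1.symm, ?_⟩
    rcases h2 with h | h
    · exact Or.inl h.symm
    · exact Or.inr ⟨h.2, h.1⟩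
  loopless := by constructor; rintro a ⟨h, -⟩; exact h rfl

/-- The graph on `U` obtained from `G[U]` by adding the edges of the complete graph
`K(N(C))` for every component `C` of `G \ U`. -/
def realized {V : Type} (G : SimpleGraph V) (U : Set V) : SimpleGraph U where
  Adj a b := a ≠ b ∧ (G.Adj (a : V) (b : V) ∨ ∃ C : (G.induce Uᶜ).ConnectedComponent,
    (a : V) ∈ nbhdSet G (compSet G U C) ∧ (b : V) ∈ nbhdSet G (compSet G U C))
  symm := by
    constructor
    rintro a b ⟨h1, h2⟩
    refine ⟨h1.symm, ?_⟩
    rcases h2 with h | ⟨C, hx, hy⟩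
    · exact Or.inl h.symm
    · exact Or.inr ⟨C, hy, hx⟩
  loopless := by constructor; rintro a ⟨h, -⟩; exact h rfl

section Aux

open Classical

variable {V ι : Type}

/-- Trichotomy for walks after deleting one edge. -/
lemma walk_trichotomy {T : SimpleGraph ι} {i j : ι} :
    ∀ {x y : ι} (_ : T.Walk x y),
      (T.deleteEdges {s(i, j)}).Reachable x y ∨
      ((T.deleteEdges {s(i, j)}).Reachable x i ∧ (T.deleteEdges {s(i, j)}).Reachable y j) ∨
      ((T.deleteEdges {s(i, j)}).Reachable x j ∧ (T.deleteEdges {s(i, j)}).Reachable y i) := by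
  intro x y w
  induction w with
  | nil => exact Or.inl (Reachable.refl _)
  | @cons a c d h w ih =>
    by_cases he : s(a, c) = s(i, j)
    · rw [Sym2.eq_iff] at he
      rcases he with ⟨rfl, rfl⟩ | ⟨rfl, rfl⟩
      · rcases ih with hcd | ⟨hci, hdj⟩ | ⟨hcj, hdi⟩
        · exact Or.inr (Or.inl ⟨Reachable.refl _, hcd.symm⟩)
        · exact Or.inl (hci.symm.trans hdj.symm)
        · exact Or.inl hdi.symm
      · rcases ih with hcd | ⟨hci, hdj⟩ | ⟨hcj, hdi⟩
        · exact Or.inr (Or.inr ⟨Reachable.refl _, hcd.symm⟩)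
        · exact Or.inl hdj.symm
        · exact Or.inl (hcj.symm.trans hdi.symm)
    · have hadj : (T.deleteEdges {s(i, j)}).Adj a c := by
        rw [SimpleGraph.deleteEdges_adj]
        exact ⟨h, by simpa using he⟩
      rcases ih with hcd | ⟨hci, hdj⟩ | ⟨hcj, hdi⟩
      · exact Or.inl (hadj.reachable.trans hcd)
      · exact Or.inr (Or.inl ⟨hadj.reachable.trans hci, hdj⟩)
      · exact Or.inr (Or.inr ⟨hadj.reachable.trans hcj, hdi⟩)

/-- Every vertex is, after deleting one edge, still reachable from one of its endpoints. -/
lemma side_partition {T : SimpleGraph ι} {i j : ι} (hTc : T.Connected) (k : ι) :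
    (T.deleteEdges {s(i, j)}).Reachable k i ∨ (T.deleteEdges {s(i, j)}).Reachable k j := by
  obtain ⟨w⟩ := hTc.preconnected k i
  rcases walk_trichotomy (i := i) (j := j) w with hki | ⟨hki, _⟩ | ⟨hkj, _⟩
  · exact Or.inl hki
  · exact Or.inl hki
  · exact Or.inr hkj

/-- Along a path from `A` to outside of `A`, there is a last edge leaving `A`,
and the rest of the path survives deleting that edge. -/
lemma last_edge {T : SimpleGraph ι} {A : Set ι} :
    ∀ {a b : ι} (w : T.Walk a b), w.IsPath → a ∈ A → b ∉ A →
      ∃ i j, i ∈ A ∧ j ∉ A ∧ T.Adj i j ∧ (T.deleteEdges {s(i, j)}).Reachable j b := by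
  intro a b w
  induction w with
  | nil => intro _ ha hb; exact absurd ha hb
  | @cons x y z h w ih =>
    intro hp hx hz
    by_cases hy : y ∈ A
    · exact ih hp.of_cons hy hz
    · refine ⟨x, y, hx, hy, h, ⟨w.toDeleteEdges _ ?_⟩⟩
      intro e he hmem
      simp only [Set.mem_singleton_iff] at hmem
      subst hmem
      have hxsup : x ∈ w.support := w.fst_mem_support_of_mem_edges he
      rw [SimpleGraph.Walk.cons_isPath_iff] at hp
      exact hp.2 hxsup

/-- The inclusion homomorphism from an induced subgraph. -/
def inclHom (T : SimpleGraph ι) (s : Set ι) : T.induce s →g T :=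
  (SimpleGraph.Embedding.induce s).toHom

/-- Key separator lemma: if a vertex `x` has bags on both sides of a deleted
tree edge `{i,j}`, then `x` lies in both `bag i` and `bag j`. -/
lemma both_sides_mem {T : SimpleGraph ι} {bag : ι → Set V} {i j : ι}
    (hconnbag : ∀ x : V, (T.induce {m | x ∈ bag m}).Connected)
    (hnr : ¬ (T.deleteEdges {s(i, j)}).Reachable i j)
    {x : V} {k l : ι} (hk : x ∈ bag k) (hl : x ∈ bag l)
    (hki : (T.deleteEdges {s(i, j)}).Reachable k i)
    (hlj : (T.deleteEdges {s(i, j)}).Reachable l j) :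
    x ∈ bag i ∩ bag j := by
  obtain ⟨p⟩ := (hconnbag x).preconnected ⟨k, hk⟩ ⟨l, hl⟩
  set q : T.Walk k l := p.map (inclHom T {m | x ∈ bag m}) with hq
  have hsupp : ∀ m ∈ q.support, x ∈ bag m := by
    intro m hm
    replace hm : m ∈ (p.map (inclHom T {m | x ∈ bag m})).support := hm
    rw [SimpleGraph.Walk.support_map] at hm
    obtain ⟨m', _, rfl⟩ := List.mem_map.mp hm
    exact m'.2
  by_cases hmem : s(i, j) ∈ q.edges
  · exact ⟨hsupp i (q.fst_mem_support_of_mem_edges hmem),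
      hsupp j (q.snd_mem_support_of_mem_edges hmem)⟩
  · exfalso
    have q' : (T.deleteEdges {s(i, j)}).Walk k l := by
      refine q.toDeleteEdges _ ?_
      intro e he hmem'
      simp only [Set.mem_singleton_iff] at hmem'
      subst hmem'
      exact hmem he
    have hkl : (T.deleteEdges {s(i, j)}).Reachable k l := ⟨q'⟩
    exact hnr (hki.symm.trans (hkl.trans hlj))

/-- Propagating "all bags on the `i`-side" along a walk avoiding `bag i ∩ bag j`. -/
lemma walk_propagate {G : SimpleGraph V} {T : SimpleGraph ι} {bag : ι → Set V} {i j : ι}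
    (hTc : T.Connected)
    (hedge : ∀ u v : V, G.Adj u v → ∃ m, u ∈ bag m ∧ v ∈ bag m)
    (hconnbag : ∀ x : V, (T.induce {m | x ∈ bag m}).Connected)
    (hnr : ¬ (T.deleteEdges {s(i, j)}).Reachable i j) :
    ∀ {x y : V} (p : G.Walk x y),
      (∀ m, x ∈ bag m → (T.deleteEdges {s(i, j)}).Reachable m i) →
      (∀ z ∈ p.support, z ∉ bag i ∩ bag j) →
      ∀ m, y ∈ bag m → (T.deleteEdges {s(i, j)}).Reachable m i := by
  intro x y p
  induction p with
  | nil => exact fun hx _ => hx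
  | @cons a c d h p ih =>
    intro hx havoid
    obtain ⟨m₀, ham, hcm⟩ := hedge a c h
    have hm₀i : (T.deleteEdges {s(i, j)}).Reachable m₀ i := hx m₀ ham
    have hc : ∀ m, c ∈ bag m → (T.deleteEdges {s(i, j)}).Reachable m i := by
      intro l hcl
      rcases side_partition (i := i) (j := j) hTc l with hli | hlj
      · exact hli
      · exfalso
        exact havoid c (by simp [SimpleGraph.Walk.support_cons])
          (both_sides_mem hconnbag hnr hcm hcl hm₀i hlj)
    exact ih hc (fun z hz => havoid z (by simp [SimpleGraph.Walk.support_cons, hz]))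

/-- Key lemma: under the hypotheses of statement 4, some bag contains both `u` and `v`. -/
lemma exists_bag_both {G : SimpleGraph V} {T : SimpleGraph ι} {bag : ι → Set V} {u v : V}
    (htd : IsTreeDecomp G T bag)
    (hsep : ∀ i j, T.Adj i j → ¬ Separates G (bag i ∩ bag j) u v) :
    ∃ i, u ∈ bag i ∧ v ∈ bag i := by
  by_contra hno
  push_neg at hno
  obtain ⟨hTc, hTa, hcov, hedge, hconnbag⟩ := htd
  obtain ⟨a, ha⟩ := hcov u
  obtain ⟨b, hb⟩ := hcov v
  have hbA : u ∉ bag b := fun h => hno b h hb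
  obtain ⟨w⟩ := hTc.preconnected a b
  obtain ⟨i, j, hiA, hjA, hij, hjb⟩ :=
    last_edge (A := {m | u ∈ bag m}) (w.toPath : T.Walk a b) w.toPath.2 ha hbA
  have hnr : ¬ (T.deleteEdges {s(i, j)}).Reachable i j := by
    have hbridge := (SimpleGraph.isAcyclic_iff_forall_adj_isBridge.mp hTa) hij
    exact SimpleGraph.isBridge_iff.mp hbridge
  refine hsep i j hij ⟨fun h => hjA h.2, fun h => hno i hiA h.1, ?_⟩
  intro p
  by_contra hcon
  push_neg at hcon
  have hu : ∀ m, u ∈ bag m → (T.deleteEdges {s(i, j)}).Reachable m i := by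
    intro m hm
    rcases side_partition (i := i) (j := j) hTc m with hmi | hmj
    · exact hmi
    · exact absurd (both_sides_mem hconnbag hnr hiA hm (Reachable.refl _) hmj).2 hjA
  have hv := walk_propagate hTc hedge hconnbag hnr p hu hcon b hb
  exact hnr (hv.symm.trans hjb.symm)

end Aux

/-- if no separator induced by the tree-decomposition `T` of `G`
separates `u` from `v`, then `T` is also a tree-decomposition of `G + e`
(where `e = {u,v}` is a fill), and hence `tw(G+e)` is at most its width. -/
theorem stmt4 {V ι : Type} [Finite V] (G : SimpleGraph V) (u v : V) (hne : u ≠ v)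
    (hnadj : ¬ G.Adj u v) (T : SimpleGraph ι) (bag : ι → Set V)
    (htd : IsTreeDecomp G T bag)
    (hsep : ∀ i j, T.Adj i j → ¬ Separates G (bag i ∩ bag j) u v) :
    IsTreeDecomp (addEdge G u v) T bag ∧
      ∀ k, (∀ i, (bag i).ncard ≤ k + 1) → tw (addEdge G u v) ≤ k := by
  obtain ⟨m, hum, hvm⟩ := exists_bag_both htd hsep
  obtain ⟨hTc, hTa, hcov, hedge, hconnbag⟩ := htd
  have htd' : IsTreeDecomp (addEdge G u v) T bag := by
    refine ⟨hTc, hTa, hcov, ?_, hconnbag⟩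
    intro x y hxy
    rcases hxy with h | h
    · exact hedge x y h
    · rw [SimpleGraph.fromEdgeSet_adj] at h
      have := h.1
      simp only [Set.mem_singleton_iff, Sym2.eq_iff] at this
      rcases this with ⟨rfl, rfl⟩ | ⟨rfl, rfl⟩
      · exact ⟨m, hum, hvm⟩
      · exact ⟨m, hvm, hum⟩
  refine ⟨htd', fun k hk => ?_⟩
  exact Nat.sInf_le ⟨ι, T, bag, htd', hk⟩
end

section
/- If S is a clique separator of G (S is a clique and G \ S is disconnected), then tw(G) equals the maximum over all components C of G \ S of tw(G[C ∪ S] with S completed into a clique); in particular tw(G) = max over components C of tw(G[N[C]] plus clique edges on S). -/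
open SimpleGraph

/-- map reachability through a function that is adjacency-or-equal preserving -/
lemma reach_map {α β : Type*} {A : SimpleGraph α} {B : SimpleGraph β} (f : α → β)
    (hf : ∀ x y, A.Adj x y → f x = f y ∨ B.Adj (f x) (f y)) {x y : α}
    (h : A.Reachable x y) : B.Reachable (f x) (f y) := by
  obtain ⟨p⟩ := h
  induction p with
  | nil => exact Reachable.refl _
  | cons h q ih =>
    rcases hf _ _ h with he | ha
    · exact he ▸ ih
    · exact (ha.reachable).trans ih

lemma tw_le_of_decomp {V ι : Type} {G : SimpleGraph V} {T : SimpleGraph ι} {bag : ι → Set V}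
    {k : ℕ} (hd : IsTreeDecomp G T bag) (hw : ∀ i, (bag i).ncard ≤ k + 1) : tw G ≤ k :=
  Nat.sInf_le ⟨ι, T, bag, hd, hw⟩

lemma tw_set_nonempty {V : Type} [Finite V] (G : SimpleGraph V) :
    (Nat.card V) ∈ {k | ∃ (ι : Type) (T : SimpleGraph ι) (bag : ι → Set V),
      IsTreeDecomp G T bag ∧ ∀ i, (bag i).ncard ≤ k + 1} := by
  refine ⟨Unit, ⊥, fun _ => Set.univ,
    ⟨(connected_iff _).mpr ⟨fun a b => by cases a; cases b; exact Reachable.refl _, ⟨()⟩⟩,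
     isAcyclic_bot, fun v => ⟨(), trivial⟩, fun u v _ => ⟨(), trivial, trivial⟩, ?_⟩, ?_⟩
  · intro v
    refine (connected_iff _).mpr ⟨?_, ⟨⟨(), trivial⟩⟩⟩
    rintro ⟨a, _⟩ ⟨b, _⟩
    cases a; cases b; exact Reachable.refl _
  · intro _
    simp only [Set.ncard_univ]
    omega

lemma exists_optimal_decomp {V : Type} [Finite V] (G : SimpleGraph V) :
    ∃ (ι : Type) (T : SimpleGraph ι) (bag : ι → Set V),
      IsTreeDecomp G T bag ∧ ∀ i, (bag i).ncard ≤ tw G + 1 :=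
  Nat.sInf_mem (Set.nonempty_of_mem (tw_set_nonempty G))

def inducedHom {ι : Type} (T : SimpleGraph ι) (W : Set ι) : T.induce W →g T :=
  ⟨Subtype.val, fun h => h⟩

lemma cross {ι : Type} {T : SimpleGraph ι} {W : Set ι} (hW : (T.induce W).Connected)
    {x y a b : ι} (hx : x ∈ W) (hy : y ∈ W) :
    (a ∈ W ∧ b ∈ W) ∨ (T.deleteEdges {s(a, b)}).Reachable x y := by
  obtain ⟨p⟩ := hW.preconnected ⟨x, hx⟩ ⟨y, hy⟩
  let q := p.map (inducedHom T W)
  by_cases he : s(a, b) ∈ q.edges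
  · left
    have ha := q.fst_mem_support_of_mem_edges he
    have hb := q.snd_mem_support_of_mem_edges he
    have hsupp : ∀ z ∈ q.support, z ∈ W := by
      intro z hz
      rw [Walk.support_map, List.mem_map] at hz
      obtain ⟨⟨z', hz'⟩, _, rfl⟩ := hz
      exact hz'
    exact ⟨hsupp a ha, hsupp b hb⟩
  · exact Or.inr ⟨q.toDeleteEdge _ he⟩

lemma first_entry {ι : Type} {T : SimpleGraph ι} {M : Set ι} {x t : ι} (p : T.Walk x t)
    (hx : x ∉ M) (ht : t ∈ M) :
    ∃ j' j, T.Adj j' j ∧ j ∈ M ∧ j' ∉ M ∧ (T.deleteEdges {s(j', j)}).Reachable x j' := by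
  induction p with
  | nil => exact absurd ht hx
  | @cons u v w h q ih =>
    by_cases hv : v ∈ M
    · exact ⟨u, v, h, hv, hx, Reachable.refl _⟩
    · obtain ⟨j', j, hadj, hjM, hj'M, hreach⟩ := ih hv ht
      refine ⟨j', j, hadj, hjM, hj'M, Reachable.trans (Adj.reachable ?_) hreach⟩
      refine ⟨h, ?_⟩
      simp only [fromEdgeSet_adj, Set.mem_singleton_iff, not_and, not_ne_iff]
      intro hcon
      rw [Sym2.eq_iff] at hcon
      rcases hcon with ⟨rfl, rfl⟩ | ⟨rfl, rfl⟩
      · exact absurd hjM hv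
      · exact absurd hjM hx

lemma clique_in_bag {V ι : Type} [Finite V] {H : SimpleGraph V} {T : SimpleGraph ι}
    {bag : ι → Set V} (hd : IsTreeDecomp H T bag) {S : Set V} (hS : H.IsClique S)
    (hne : S.Nonempty) : ∃ i, S ⊆ bag i := by
  classical
  obtain ⟨hTc, hTa, hcov, hedge, hconn⟩ := hd
  have hbdd : BddAbove (Set.range fun i => (S ∩ bag i).ncard) := by
    refine ⟨S.ncard, ?_⟩
    rintro _ ⟨i, rfl⟩
    exact Set.ncard_le_ncard Set.inter_subset_left S.toFinite
  obtain ⟨i₀⟩ := hTc.nonempty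
  have hner : (Set.range fun i => (S ∩ bag i).ncard).Nonempty := ⟨_, ⟨i₀, rfl⟩⟩
  obtain ⟨i, hi⟩ := Nat.sSup_mem hner hbdd
  have hi' : (S ∩ bag i).ncard = sSup (Set.range fun i => (S ∩ bag i).ncard) := hi
  have hmax : ∀ i', (S ∩ bag i').ncard ≤ (S ∩ bag i).ncard := by
    intro i'
    rw [hi']
    exact le_csSup hbdd ⟨i', rfl⟩
  by_contra hcon
  push_neg at hcon
  obtain ⟨v, hvS, hvb⟩ := Set.not_subset.mp (hcon i)
  obtain ⟨t, ht⟩ := hcov v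
  obtain ⟨p⟩ := hTc.preconnected i t
  obtain ⟨j', j, hadj, hjM, hj'M, hreach⟩ :=
    first_entry (M := {k | v ∈ bag k}) p hvb ht
  have hbridge : ¬ (T.deleteEdges {s(j', j)}).Reachable j' j :=
    ((isBridge_iff.mp (isAcyclic_iff_forall_adj_isBridge.mp hTa hadj)))
  have hsubset : insert v (S ∩ bag i) ⊆ S ∩ bag j := by
    rintro u (rfl | ⟨huS, hub⟩)
    · exact ⟨hvS, hjM⟩
    · refine ⟨huS, ?_⟩
      have huv : u ≠ v := fun h => hvb (h ▸ hub)
      obtain ⟨m, hum, hvm⟩ := hedge u v (hS huS hvS huv)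
      have hmside : ¬ (T.deleteEdges {s(j', j)}).Reachable m j' := by
        intro hr
        rcases cross (hconn v) (a := j') (b := j) hvm hjM with ⟨hj'M', _⟩ | hr2
        · exact hj'M hj'M'
        · exact hbridge (hr.symm.trans hr2)
      rcases cross (hconn u) (a := j') (b := j) (show i ∈ {k | u ∈ bag k} from hub) hum with
        ⟨_, hjW⟩ | hr2
      · exact hjW
      · exact absurd (hr2.symm.trans hreach) hmside
  have hfin : (S ∩ bag j).ncard ≤ (S ∩ bag i).ncard := hmax j
  have : (insert v (S ∩ bag i)).ncard = (S ∩ bag i).ncard + 1 :=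
    Set.ncard_insert_of_notMem (fun h => hvb h.2) (Set.toFinite _)
  have hle : (insert v (S ∩ bag i)).ncard ≤ (S ∩ bag j).ncard :=
    Set.ncard_le_ncard hsubset (Set.toFinite _)
  omega

lemma tw_block_le {V : Type} [Finite V] (G : SimpleGraph V) (S : Set V)
    (hclique : G.IsClique S) (U : Set V) (hSU : S ⊆ U) :
    tw (completedOn G U S) ≤ tw G := by
  obtain ⟨ι, T, bag, ⟨hTc, hTa, hcov, hedge, hconn⟩, hw⟩ := exists_optimal_decomp G
  refine tw_le_of_decomp (T := T) (bag := fun i => (Subtype.val ⁻¹' bag i : Set U))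
    ⟨hTc, hTa, ?_, ?_, ?_⟩ ?_
  · intro u; obtain ⟨i, hi⟩ := hcov ↑u; exact ⟨i, hi⟩
  · rintro a b ⟨hne, hG | ⟨haS, hbS⟩⟩
    · obtain ⟨i, h1, h2⟩ := hedge _ _ hG; exact ⟨i, h1, h2⟩
    · obtain ⟨i, hi⟩ := clique_in_bag ⟨hTc, hTa, hcov, hedge, hconn⟩ hclique ⟨_, haS⟩
      exact ⟨i, hi haS, hi hbS⟩
  · intro u
    exact hconn ↑u
  · intro i
    calc (Subtype.val ⁻¹' bag i : Set U).ncard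
        = (Subtype.val '' (Subtype.val ⁻¹' bag i) : Set V).ncard :=
          (Set.ncard_image_of_injective _ Subtype.val_injective).symm
      _ ≤ (bag i).ncard := Set.ncard_le_ncard (Set.image_preimage_subset _ _) (Set.toFinite _)
      _ ≤ tw G + 1 := hw i

lemma reach_const {α β : Type*} {A : SimpleGraph α} (f : α → β)
    (hf : ∀ x y, A.Adj x y → f x = f y) {x y : α} (h : A.Reachable x y) : f x = f y := by
  obtain ⟨p⟩ := h
  induction p with
  | nil => rfl
  | cons h q ih => exact (hf _ _ h).trans ih

section Glue

variable {V : Type} [Finite V] (G : SimpleGraph V) (S : Set V)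

lemma tw_le_glue (hclique : G.IsClique S) (hne : Nonempty ((G.induce Sᶜ).ConnectedComponent))
    (M : ℕ) (hM : ∀ C : ((G.induce Sᶜ).ConnectedComponent), tw (completedOn G (compSet G S C ∪ S) S) ≤ M) :
    tw G ≤ M := by
  classical
  set U : ((G.induce Sᶜ).ConnectedComponent) → Set V := fun C => compSet G S C ∪ S with hU
  set H : (C : ((G.induce Sᶜ).ConnectedComponent)) → SimpleGraph (U C) := fun C => completedOn G (U C) S with hH
  -- the coerced clique S inside each block
  have hScl : ∀ C : ((G.induce Sᶜ).ConnectedComponent), (H C).IsClique {u : U C | (u : V) ∈ S} := by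
    intro C a ha b hb hab
    exact ⟨hab, Or.inr ⟨ha, hb⟩⟩
  have hdec : ∀ C : ((G.induce Sᶜ).ConnectedComponent), ∃ (κ : Type) (T : SimpleGraph κ) (bag : κ → Set (U C)),
      IsTreeDecomp (H C) T bag ∧ (∀ i, (bag i).ncard ≤ M + 1) ∧
        ∃ r, {u : U C | (u : V) ∈ S} ⊆ bag r := by
    intro C
    obtain ⟨κ, T, bag, hd, hw⟩ := exists_optimal_decomp (H C)
    refine ⟨κ, T, bag, hd, fun i => le_trans (hw i) (Nat.succ_le_succ (hM C)), ?_⟩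
    rcases Set.eq_empty_or_nonempty ({u : U C | (u : V) ∈ S}) with he | hne'
    · obtain ⟨i⟩ := hd.1.nonempty
      exact ⟨i, by rw [he]; exact Set.empty_subset _⟩
    · exact clique_in_bag hd (hScl C) hne'
  choose κ T bag hdecomp hwidth hrex using hdec
  choose r hr using hrex
  -- glued tree
  set ι' : Type := Option ((C : ((G.induce Sᶜ).ConnectedComponent)) × κ C) with hι'
  set T' : SimpleGraph ι' :=
    { Adj := fun x y =>
        (∃ (C : ((G.induce Sᶜ).ConnectedComponent)) (i j : κ C), (T C).Adj i j ∧ x = some ⟨C, i⟩ ∧ y = some ⟨C, j⟩) ∨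
        (x = none ∧ ∃ C, y = some ⟨C, r C⟩) ∨ (y = none ∧ ∃ C, x = some ⟨C, r C⟩),
      symm := by
        constructor
        rintro x y (⟨C, i, j, hij, rfl, rfl⟩ | ⟨rfl, C, rfl⟩ | ⟨rfl, C, rfl⟩)
        · exact Or.inl ⟨C, j, i, hij.symm, rfl, rfl⟩
        · exact Or.inr (Or.inr ⟨rfl, C, rfl⟩)
        · exact Or.inr (Or.inl ⟨rfl, C, rfl⟩)
      loopless := by
        constructor
        rintro x (⟨C, i, j, hij, rfl, h2⟩ | ⟨rfl, C, h⟩ | ⟨h, C, rfl⟩)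
        · obtain rfl : i = j := sigma_mk_injective (Option.some_injective _ h2)
          exact hij.ne rfl
        · exact nomatch h
        · exact nomatch h } with hT'
  set bag' : ι' → Set V := fun x => match x with
    | none => S
    | some ⟨C, i⟩ => Subtype.val '' bag C i with hbag'
  -- homs from each block tree into the glued tree
  have hhom : ∀ C : ((G.induce Sᶜ).ConnectedComponent), ∀ (i j : κ C), (T C).Adj i j →
      T'.Adj (some ⟨C, i⟩) (some ⟨C, j⟩) := fun C i j h => Or.inl ⟨C, i, j, h, rfl, rfl⟩
  have hreach_some : ∀ (C : ((G.induce Sᶜ).ConnectedComponent)) (i j : κ C), (T C).Reachable i j →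
      T'.Reachable (some ⟨C, i⟩) (some ⟨C, j⟩) := by
    intro C i j h
    exact reach_map (fun k => (some ⟨C, k⟩ : ι')) (fun x y hxy => Or.inr (hhom C x y hxy)) h
  have hroot : ∀ C : ((G.induce Sᶜ).ConnectedComponent), T'.Adj (some ⟨C, r C⟩) none :=
    fun C => Or.inr (Or.inr ⟨rfl, C, rfl⟩)
  have hreach_none : ∀ x : ι', T'.Reachable x none := by
    rintro (_ | ⟨C, i⟩)
    · exact Reachable.refl _
    · exact (hreach_some C i (r C) ((hdecomp C).1.preconnected i (r C))).trans
        (hroot C).reachable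
  have hT'conn : T'.Connected := by
    refine (connected_iff _).mpr ⟨fun x y => (hreach_none x).trans (hreach_none y).symm, ⟨none⟩⟩
  have hT'acyclic : T'.IsAcyclic := by
    rw [isAcyclic_iff_forall_adj_isBridge]
    intro x y hxy
    rw [isBridge_iff]
    refine ?_
    intro hre
    replace hre : (T'.deleteEdges {s(x, y)}).Reachable x y := hre
    -- a helper for the two root-edge cases
    have hrootcase : ∀ C : ((G.induce Sᶜ).ConnectedComponent),
        ¬ (T'.deleteEdges {s((none : ι'), some ⟨C, r C⟩)}).Reachable none (some ⟨C, r C⟩) := by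
      intro C hre2
      set g : ι' → Bool := fun z =>
        Option.rec false (fun p => if p.1 = C then true else false) z with hg
      have hgconst : ∀ a b : ι',
          (T'.deleteEdges {s((none : ι'), some ⟨C, r C⟩)}).Adj a b → g a = g b := by
        intro a b hab
        rw [deleteEdges_adj] at hab
        obtain ⟨hab, hne_e⟩ := hab
        rcases hab with ⟨D, a', b', hab', rfl, rfl⟩ | ⟨rfl, D, rfl⟩ | ⟨rfl, D, rfl⟩
        · rfl
        · have hD : D ≠ C := by
            rintro rfl
            exact hne_e rfl
          show false = if D = C then true else false
          rw [if_neg hD]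
        · have hD : D ≠ C := by
            rintro rfl
            apply hne_e
            show s(some ⟨D, r D⟩, (none : ι')) = s((none : ι'), some ⟨D, r D⟩)
            exact Sym2.eq_swap
          show (if D = C then true else false) = false
          rw [if_neg hD]
      have := reach_const g hgconst hre2
      have hgn : g none = false := rfl
      have hgs : g (some ⟨C, r C⟩) = true := by
        show (if C = C then true else false) = true
        rw [if_pos rfl]
      rw [hgn, hgs] at this
      exact Bool.noConfusion this
    rcases hxy with ⟨C, i, j, hij, rfl, rfl⟩ | ⟨rfl, C, rfl⟩ | ⟨rfl, C, rfl⟩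
    · have hbr : ¬ ((T C).deleteEdges {s(i, j)}).Reachable i j :=
        (isBridge_iff.mp (isAcyclic_iff_forall_adj_isBridge.mp (hdecomp C).2.1 hij))
      set f : ι' → κ C := fun z =>
        Option.rec (r C) (fun p => if h : p.1 = C then h ▸ p.2 else r C) z with hf
      have hfC : ∀ k : κ C, f (some ⟨C, k⟩) = k := fun k => dif_pos rfl
      have hfmap : ∀ a b : ι', (T'.deleteEdges {s(some ⟨C, i⟩, some ⟨C, j⟩)}).Adj a b →
          f a = f b ∨ ((T C).deleteEdges {s(i, j)}).Adj (f a) (f b) := by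
        intro a b hab
        rw [deleteEdges_adj] at hab
        obtain ⟨hab, hne_e⟩ := hab
        rcases hab with ⟨D, a', b', hab', rfl, rfl⟩ | ⟨rfl, D, rfl⟩ | ⟨rfl, D, rfl⟩
        · by_cases hD : D = C
          · subst hD
            right
            rw [hfC a', hfC b', deleteEdges_adj]
            refine ⟨hab', ?_⟩
            simp only [Set.mem_singleton_iff]
            intro hcon
            apply hne_e
            simp only [Set.mem_singleton_iff]
            rw [Sym2.eq_iff] at hcon ⊢
            rcases hcon with ⟨rfl, rfl⟩ | ⟨rfl, rfl⟩
            · exact Or.inl ⟨rfl, rfl⟩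
            · exact Or.inr ⟨rfl, rfl⟩
          · left
            have e1 : f (some ⟨D, a'⟩) = r C := dif_neg hD
            have e2 : f (some ⟨D, b'⟩) = r C := dif_neg hD
            rw [e1, e2]
        · left
          by_cases hD : D = C
          · subst hD
            exact (hfC (r D)).symm
          · exact (dif_neg hD : f (some ⟨D, r D⟩) = r C).symm
        · left
          by_cases hD : D = C
          · subst hD
            exact hfC (r D)
          · exact (dif_neg hD : f (some ⟨D, r D⟩) = r C)
      have hri := reach_map f hfmap hre
      rw [hfC i, hfC j] at hri
      exact hbr hri
    · exact hrootcase C hre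
    · have hre' := hre.symm
      rw [Sym2.eq_swap] at hre'
      exact hrootcase C hre'
  -- vertex cover
  have hcov' : ∀ v : V, ∃ x : ι', v ∈ bag' x := by
    intro v
    by_cases hv : v ∈ S
    · exact ⟨none, hv⟩
    · have hvU : v ∈ U ((G.induce Sᶜ).connectedComponentMk ⟨v, hv⟩) := Or.inl ⟨hv, rfl⟩
      obtain ⟨i, hi⟩ := (hdecomp _).2.2.1 ⟨v, hvU⟩
      exact ⟨some ⟨_, i⟩, ⟨⟨v, hvU⟩, hi, rfl⟩⟩
  -- edge cover
  have hedge' : ∀ u v : V, G.Adj u v → ∃ x : ι', u ∈ bag' x ∧ v ∈ bag' x := by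
    intro u v huv
    by_cases hu : u ∈ S
    · by_cases hv : v ∈ S
      · exact ⟨none, hu, hv⟩
      · have hvU : v ∈ U ((G.induce Sᶜ).connectedComponentMk ⟨v, hv⟩) := Or.inl ⟨hv, rfl⟩
        have huU : u ∈ U ((G.induce Sᶜ).connectedComponentMk ⟨v, hv⟩) := Or.inr hu
        have hadj : (H _).Adj ⟨u, huU⟩ ⟨v, hvU⟩ :=
          ⟨fun h => huv.ne (congrArg Subtype.val h), Or.inl huv⟩
        obtain ⟨i, h1, h2⟩ := (hdecomp _).2.2.2.1 _ _ hadj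
        exact ⟨some ⟨_, i⟩, ⟨⟨u, huU⟩, h1, rfl⟩, ⟨⟨v, hvU⟩, h2, rfl⟩⟩
    · have huU : u ∈ U ((G.induce Sᶜ).connectedComponentMk ⟨u, hu⟩) := Or.inl ⟨hu, rfl⟩
      by_cases hv : v ∈ S
      · have hvU : v ∈ U ((G.induce Sᶜ).connectedComponentMk ⟨u, hu⟩) := Or.inr hv
        have hadj : (H _).Adj ⟨u, huU⟩ ⟨v, hvU⟩ :=
          ⟨fun h => huv.ne (congrArg Subtype.val h), Or.inl huv⟩
        obtain ⟨i, h1, h2⟩ := (hdecomp _).2.2.2.1 _ _ hadj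
        exact ⟨some ⟨_, i⟩, ⟨⟨u, huU⟩, h1, rfl⟩, ⟨⟨v, hvU⟩, h2, rfl⟩⟩
      · have hadj' : (G.induce Sᶜ).Adj ⟨v, hv⟩ ⟨u, hu⟩ := huv.symm
        have hvU : v ∈ U ((G.induce Sᶜ).connectedComponentMk ⟨u, hu⟩) :=
          Or.inl ⟨hv, ConnectedComponent.eq.mpr hadj'.reachable⟩
        have hadj : (H _).Adj ⟨u, huU⟩ ⟨v, hvU⟩ :=
          ⟨fun h => huv.ne (congrArg Subtype.val h), Or.inl huv⟩
        obtain ⟨i, h1, h2⟩ := (hdecomp _).2.2.2.1 _ _ hadj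
        exact ⟨some ⟨_, i⟩, ⟨⟨u, huU⟩, h1, rfl⟩, ⟨⟨v, hvU⟩, h2, rfl⟩⟩
  -- bag connectivity
  have hconn' : ∀ v : V, (T'.induce {x : ι' | v ∈ bag' x}).Connected := by
    intro v
    have hmem : ∀ (C) (i : κ C), ((some ⟨C, i⟩ : ι') ∈ {x : ι' | v ∈ bag' x}) ↔
        ∃ hUv : v ∈ U C, (⟨v, hUv⟩ : U C) ∈ bag C i := by
      intro C i
      constructor
      · rintro ⟨⟨w, hw⟩, hwb, rfl⟩
        exact ⟨hw, hwb⟩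
      · rintro ⟨hUv, hb⟩
        exact ⟨⟨v, hUv⟩, hb, rfl⟩
    have hstep : ∀ (C) (hUv : v ∈ U C) (i j : κ C) (hi : (⟨v, hUv⟩ : U C) ∈ bag C i)
        (hj : (⟨v, hUv⟩ : U C) ∈ bag C j),
        (T'.induce {x : ι' | v ∈ bag' x}).Reachable
          ⟨some ⟨C, i⟩, (hmem C i).mpr ⟨hUv, hi⟩⟩ ⟨some ⟨C, j⟩, (hmem C j).mpr ⟨hUv, hj⟩⟩ := by
      intro C hUv i j hi hj
      have hc := ((hdecomp C).2.2.2.2 ⟨v, hUv⟩).preconnected ⟨i, hi⟩ ⟨j, hj⟩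
      exact reach_map
        (fun (k : {k : κ C | (⟨v, hUv⟩ : U C) ∈ bag C k}) =>
          (⟨some ⟨C, k.1⟩, (hmem C k.1).mpr ⟨hUv, k.2⟩⟩ : {x : ι' | v ∈ bag' x}))
        (fun a b hab => Or.inr (hhom C a.1 b.1 hab)) hc
    by_cases hvS : v ∈ S
    · have hnA : (none : ι') ∈ {x : ι' | v ∈ bag' x} := hvS
      have key : ∀ z : {x : ι' | v ∈ bag' x},
          (T'.induce {x : ι' | v ∈ bag' x}).Reachable z ⟨none, hnA⟩ := by
        rintro ⟨(_ | ⟨C, i⟩), hz⟩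
        · exact Reachable.refl _
        · obtain ⟨hUv, hi⟩ := (hmem C i).mp hz
          have hrC : (⟨v, hUv⟩ : U C) ∈ bag C (r C) :=
            hr C (show ((⟨v, hUv⟩ : U C) : V) ∈ S from hvS)
          refine (hstep C hUv i (r C) hi hrC).trans (Adj.reachable ?_)
          exact hroot C
      exact (connected_iff _).mpr ⟨fun a b => (key a).trans (key b).symm, ⟨⟨none, hnA⟩⟩⟩
    · have hvU₀ : v ∈ U ((G.induce Sᶜ).connectedComponentMk ⟨v, hvS⟩) := Or.inl ⟨hvS, rfl⟩
      obtain ⟨i₀, hi₀⟩ := (hdecomp _).2.2.1 ⟨v, hvU₀⟩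
      have hbase : ((some ⟨(G.induce Sᶜ).connectedComponentMk ⟨v, hvS⟩, i₀⟩ : ι') ∈
          {x : ι' | v ∈ bag' x}) := (hmem _ i₀).mpr ⟨hvU₀, hi₀⟩
      have key : ∀ z : {x : ι' | v ∈ bag' x},
          (T'.induce {x : ι' | v ∈ bag' x}).Reachable z ⟨_, hbase⟩ := by
        rintro ⟨(_ | ⟨C, i⟩), hz⟩
        · exact absurd hz hvS
        · obtain ⟨hUv, hi⟩ := (hmem C i).mp hz
          have hCeq : C = (G.induce Sᶜ).connectedComponentMk ⟨v, hvS⟩ := by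
            rcases hUv with ⟨hv', hmk⟩ | hS
            · exact hmk.symm
            · exact absurd hS hvS
          subst hCeq
          exact hstep _ hUv i i₀ hi hi₀
      exact (connected_iff _).mpr ⟨fun a b => (key a).trans (key b).symm, ⟨⟨_, hbase⟩⟩⟩
  -- width
  have hwid : ∀ x : ι', (bag' x).ncard ≤ M + 1 := by
    rintro (_ | ⟨C, i⟩)
    · obtain ⟨C⟩ := hne
      have hsub : S ⊆ Subtype.val '' bag C (r C) := fun s hs =>
        ⟨⟨s, Or.inr hs⟩, hr C hs, rfl⟩
      calc S.ncard ≤ (Subtype.val '' bag C (r C)).ncard :=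
            Set.ncard_le_ncard hsub (Set.toFinite _)
        _ = (bag C (r C)).ncard := Set.ncard_image_of_injective _ Subtype.val_injective
        _ ≤ M + 1 := hwidth C (r C)
    · calc (Subtype.val '' bag C i).ncard = (bag C i).ncard :=
            Set.ncard_image_of_injective _ Subtype.val_injective
        _ ≤ M + 1 := hwidth C i
  exact tw_le_of_decomp ⟨hT'conn, hT'acyclic, hcov', hedge', hconn'⟩ hwid

end Glue


/-- if `S` is a clique separator of `G`, then `tw G` is the maximum,
over all components `C` of `G \ S`, of the treewidth of `G[C ∪ S]` with `S`
completed into a clique. -/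
theorem stmt5 {V : Type} [Finite V] (G : SimpleGraph V) (S : Set V)
    (hclique : G.IsClique S) (hdisc : ¬ (G.induce Sᶜ).Preconnected) :
    IsGreatest {k | ∃ C : (G.induce Sᶜ).ConnectedComponent,
      k = tw (completedOn G (compSet G S C ∪ S) S)} (tw G) := by

  classical
  have hne : Nonempty ((G.induce Sᶜ).ConnectedComponent) := by
    simp only [SimpleGraph.Preconnected] at hdisc
    push_neg at hdisc
    obtain ⟨u, v, h⟩ := hdisc
    exact ⟨(G.induce Sᶜ).connectedComponentMk u⟩
  have hub : ∀ C : (G.induce Sᶜ).ConnectedComponent,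
      tw (completedOn G (compSet G S C ∪ S) S) ≤ tw G :=
    fun C => tw_block_le G S hclique _ Set.subset_union_right
  have hbdd : BddAbove {k | ∃ C : (G.induce Sᶜ).ConnectedComponent,
      k = tw (completedOn G (compSet G S C ∪ S) S)} := by
    refine ⟨tw G, ?_⟩
    rintro k ⟨C, rfl⟩
    exact hub C
  have hKne : Set.Nonempty {k | ∃ C : (G.induce Sᶜ).ConnectedComponent,
      k = tw (completedOn G (compSet G S C ∪ S) S)} := ⟨_, hne.some, rfl⟩
  obtain ⟨C₀, hC₀⟩ := Nat.sSup_mem hKne hbdd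
  have hM : ∀ C : (G.induce Sᶜ).ConnectedComponent,
      tw (completedOn G (compSet G S C ∪ S) S) ≤
        sSup {k | ∃ C : (G.induce Sᶜ).ConnectedComponent,
          k = tw (completedOn G (compSet G S C ∪ S) S)} :=
    fun C => le_csSup hbdd ⟨C, rfl⟩
  have h1 := tw_le_glue G S hclique hne _ hM
  have h2 : sSup {k | ∃ C : (G.induce Sᶜ).ConnectedComponent,
      k = tw (completedOn G (compSet G S C ∪ S) S)} ≤ tw G := hC₀ ▸ hub C₀
  have h3 := le_antisymm h1 h2
  refine ⟨⟨C₀, h3.trans hC₀⟩, ?_⟩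
  rintro k ⟨C, rfl⟩
  exact hub C
end

section
/- Let S be a minimal separator of G that is an almost-clique (S \ {v} is a clique for some v ∈ S). Then S is safe for treewidth: G has a tree-decomposition of width tw(G) that induces S as an intersection of adjacent bags. -/
open SimpleGraph

open SimpleGraph

namespace SafeSep

variable {V : Type} {G : SimpleGraph V}

/-- The inclusion hom from an induced subgraph to the ambient graph. -/
def valHom (G : SimpleGraph V) (A : Set V) : G.induce A →g G :=
  ⟨Subtype.val, fun h => h⟩

@[simp] lemma valHom_apply {A : Set V} (x : A) : valHom G A x = x.1 := rfl

/-- A walk in `G` whose support lies in `A` yields reachability in `G.induce A`. -/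
lemma reach_induce_of_walk {A : Set V} :
    ∀ {a b : V} (w : G.Walk a b) (hs : ∀ z ∈ w.support, z ∈ A),
      (G.induce A).Reachable ⟨a, hs a w.start_mem_support⟩ ⟨b, hs b w.end_mem_support⟩ := by
  intro a b w
  induction w with
  | nil => intro hs; rfl
  | @cons a c b h p ih =>
    intro hs
    have hsp : ∀ z ∈ p.support, z ∈ A := fun z hz => hs z (by simp [hz])
    have h1 : (G.induce A).Adj ⟨a, hs a (by simp)⟩ ⟨c, hsp c p.start_mem_support⟩ := h
    exact h1.reachable.trans (ih hsp)

/-- A walk in `G.induce A` maps to a walk in `G` with support in `A`. -/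
lemma exists_walk_of_induce_reach {A : Set V} {x y : A}
    (h : (G.induce A).Reachable x y) :
    ∃ w : G.Walk x.1 y.1, ∀ z ∈ w.support, z ∈ A := by
  obtain ⟨w⟩ := h
  refine ⟨w.map (valHom G A), fun z hz => ?_⟩
  replace hz : z ∈ w.support.map (valHom G A) := by rw [← Walk.support_map]; exact hz
  obtain ⟨⟨z', hz'⟩, _, rfl⟩ := List.mem_map.mp hz
  exact hz'

lemma reach_induce_mono {A B : Set V} (hAB : A ⊆ B) {x y : A}
    (h : (G.induce A).Reachable x y) :
    (G.induce B).Reachable ⟨x.1, hAB x.2⟩ ⟨y.1, hAB y.2⟩ := by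
  obtain ⟨w, hw⟩ := exists_walk_of_induce_reach h
  exact reach_induce_of_walk w (fun z hz => hAB (hw z hz))

/-- In an acyclic graph, a vertex `t` cannot have two distinct neighbors joined by a
walk avoiding `t`. -/
lemma no_two_neighbors {T : SimpleGraph V} (hT : T.IsAcyclic) {t u u' : V}
    (hne : u ≠ u') (hu : T.Adj t u) (hu' : T.Adj t u') (w : T.Walk u u')
    (hw : t ∉ w.support) : False := by
  classical
  have hbp : t ∉ w.bypass.support := fun h => hw (w.support_bypass_subset h)
  have hpath : (w.bypass.concat hu'.symm).IsPath := by
    rw [Walk.isPath_def, Walk.support_concat]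
    exact List.Nodup.append (w.bypass_isPath.support_nodup) (List.nodup_singleton t)
      (by intro z hz1 hz2; simp at hz2; subst hz2; exact hbp hz1)
  have hedge : s(t, u) ∉ (w.bypass.concat hu'.symm).edges := by
    rw [Walk.edges_concat]
    intro hmem
    rw [List.concat_eq_append] at hmem
    rcases List.mem_append.mp hmem with h1 | h1
    · exact hbp (Walk.fst_mem_support_of_mem_edges _ h1)
    · simp only [List.mem_singleton] at h1
      rw [Sym2.eq_iff] at h1
      rcases h1 with ⟨h2, h3⟩ | ⟨h2, h3⟩
      · exact hu'.ne h2
      · exact hne h3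
  exact hT _ (Path.cons_isCycle ⟨_, hpath⟩ hu hedge)

end SafeSep

namespace SafeSep

variable {V : Type} {G : SimpleGraph V}

/-- Helly property: a set of vertices pairwise sharing bags lies in a common bag. -/
lemma helly {ι : Type} {T : SimpleGraph ι} {bag : ι → Set V}
    (hconn : T.Connected) (hacyc : T.IsAcyclic)
    (hsub : ∀ u : V, (T.induce {i | u ∈ bag i}).Connected)
    (X : Set V) (hXfin : X.Finite)
    (hpair : ∀ u ∈ X, ∀ v ∈ X, ∃ i, u ∈ bag i ∧ v ∈ bag i) :
    ∃ i, X ⊆ bag i := by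
  classical
  revert hpair
  refine Set.Finite.induction_on
    (motive := fun X _ => (∀ u ∈ X, ∀ v ∈ X, ∃ i, u ∈ bag i ∧ v ∈ bag i) → ∃ i, X ⊆ bag i)
    X hXfin (fun _ => ⟨hconn.nonempty.some, by simp⟩) ?_
  rintro x Y hxY hYfin IH hpair
  obtain ⟨t, hYt⟩ := IH fun u hu v hv =>
    hpair u (Set.mem_insert_of_mem _ hu) v (Set.mem_insert_of_mem _ hv)
  obtain ⟨s0, hxs0, -⟩ := hpair x (Set.mem_insert _ _) x (Set.mem_insert _ _)
  obtain ⟨p⟩ := hconn.preconnected t s0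
  have key : ∀ (n : ℕ) (t : ι), ∀ p : T.Walk t s0, p.length ≤ n →
      (∀ y ∈ Y, y ∈ bag t) → ∃ r, ∀ y ∈ insert x Y, y ∈ bag r := by
    intro n
    induction n with
    | zero =>
      intro t p hl hY
      have ht : t = s0 := Walk.eq_of_length_eq_zero (Nat.le_zero.mp hl)
      subst ht
      refine ⟨t, fun y hy => ?_⟩
      rcases Set.mem_insert_iff.mp hy with rfl | hy
      · exact hxs0
      · exact hY y hy
    | succ n ih =>
      intro t p hl hY
      by_cases hxt : x ∈ bag t
      · refine ⟨t, fun y hy => ?_⟩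
        rcases Set.mem_insert_iff.mp hy with rfl | hy
        · exact hxt
        · exact hY y hy
      have hts : t ≠ s0 := fun h => hxt (h ▸ hxs0)
      obtain ⟨t', h1, P', hPeq⟩ := Walk.exists_eq_cons_of_ne hts p.bypass
      have hPpath := p.bypass_isPath
      rw [hPeq] at hPpath
      have htP' : t ∉ P'.support := by
        have := hPpath.support_nodup
        rw [Walk.support_cons] at this
        exact (List.nodup_cons.mp this).1
      -- every `y ∈ Y` lies in `bag t'`
      have hYt' : ∀ y ∈ Y, y ∈ bag t' := by
        intro y hy
        obtain ⟨k, hxk, hyk⟩ :=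
          hpair x (Set.mem_insert _ _) y (Set.mem_insert_of_mem _ hy)
        have htk : t ≠ k := fun h => hxt (h ▸ hxk)
        obtain ⟨wq, hwq⟩ := exists_walk_of_induce_reach
          ((hsub y).preconnected ⟨t, hY y hy⟩ ⟨k, hyk⟩)
        have hq : ∀ z ∈ wq.bypass.support, y ∈ bag z := fun z hz =>
          hwq z (wq.support_bypass_subset hz)
        obtain ⟨u, h2, q2, hqeq⟩ := Walk.exists_eq_cons_of_ne htk wq.bypass
        have hqpath := wq.bypass_isPath
        rw [hqeq] at hqpath
        have htq2 : t ∉ q2.support := by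
          have := hqpath.support_nodup
          rw [Walk.support_cons] at this
          exact (List.nodup_cons.mp this).1
        have hyu : y ∈ bag u := by
          apply hq
          rw [hqeq, Walk.support_cons]
          exact List.mem_cons_of_mem _ q2.start_mem_support
        by_cases huv : u = t'
        · exact huv ▸ hyu
        -- otherwise build a walk from u to t' avoiding t, contradiction
        exfalso
        obtain ⟨wx, hwx⟩ := exists_walk_of_induce_reach
          ((hsub x).preconnected ⟨k, hxk⟩ ⟨s0, hxs0⟩)
        have htwx : t ∉ wx.support := fun h => hxt (hwx t h)
        have htrev : t ∉ P'.reverse.support := by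
          rw [Walk.support_reverse]; exact fun h => htP' (List.mem_reverse.mp h)
        refine no_two_neighbors hacyc huv h2 h1
          (q2.append (wx.append P'.reverse)) ?_
        rw [Walk.mem_support_append_iff, Walk.mem_support_append_iff]
        push_neg
        exact ⟨htq2, htwx, htrev⟩
      -- recurse with the shorter walk `P'`
      refine ih t' P' ?_ hYt'
      have h3 : P'.length + 1 = p.bypass.length := by rw [hPeq, Walk.length_cons]
      have h4 := p.length_bypass_le
      omega
  exact
    let ⟨r, hr⟩ := key p.length t p le_rfl hYt
    ⟨r, fun y hy => hr y hy⟩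

end SafeSep


namespace SafeSep

variable {V : Type} {G : SimpleGraph V}

/-- A tree-decomposition of `G` induces one of any minor of `G` on the same tree. -/
lemma minor_hasTD {W : Type} [Finite V] (H : SimpleGraph W)
    (hm : IsMinorOf H G) {ι : Type} {T : SimpleGraph ι} {bag : ι → Set V}
    (hd : IsTreeDecomp G T bag) {k : ℕ} (hw : ∀ i, (bag i).ncard ≤ k + 1) :
    ∃ bag' : ι → Set W, IsTreeDecomp H T bag' ∧ ∀ i, (bag' i).ncard ≤ k + 1 := by
  classical
  obtain ⟨B, hne, hBconn, hdisj, hedge⟩ := hm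
  obtain ⟨hTconn, hTacyc, hvc, hec, hsub⟩ := hd
  refine ⟨fun i => {w | ∃ u ∈ B w, u ∈ bag i}, ⟨hTconn, hTacyc, ?_, ?_, ?_⟩, ?_⟩
  · intro w
    obtain ⟨u, huB⟩ := hne w
    obtain ⟨i, hui⟩ := hvc u
    exact ⟨i, u, huB, hui⟩
  · intro w1 w2 hadj
    obtain ⟨u, huB, vv, hvB, huv⟩ := hedge w1 w2 hadj
    obtain ⟨i, hui, hvi⟩ := hec u vv huv
    exact ⟨i, ⟨u, huB, hui⟩, ⟨vv, hvB, hvi⟩⟩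
  · intro w
    set A : Set ι := {i | w ∈ {w | ∃ u ∈ B w, u ∈ bag i}} with hA
    have hmono : ∀ (a : V), a ∈ B w → {l | a ∈ bag l} ⊆ A :=
      fun a haB l hl => ⟨a, haB, hl⟩
    have claim : ∀ (a b : V) (p : G.Walk a b), (∀ z ∈ p.support, z ∈ B w) →
        ∀ (i j : ι) (hi : i ∈ A) (hj : j ∈ A), a ∈ bag i → b ∈ bag j →
        (T.induce A).Reachable ⟨i, hi⟩ ⟨j, hj⟩ := by
      intro a b p
      induction p with
      | nil =>
        intro hs i j hi hj hai haj
        exact reach_induce_mono (hmono _ (hs _ (by simp)))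
          ((hsub _).preconnected ⟨i, hai⟩ ⟨j, haj⟩)
      | @cons a c b h p ih =>
        intro hs i j hi hj hai hbj
        obtain ⟨l, hal, hcl⟩ := hec a c h
        have hlA : l ∈ A := ⟨a, hs a (by simp), hal⟩
        have r1 : (T.induce A).Reachable ⟨i, hi⟩ ⟨l, hlA⟩ :=
          reach_induce_mono (hmono _ (hs a (by simp)))
            ((hsub _).preconnected ⟨i, hai⟩ ⟨l, hal⟩)
        exact r1.trans (ih (fun z hz => hs z (by simp [hz])) l j hlA hj hcl hbj)
    rw [connected_iff]
    refine ⟨?_, ?_⟩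
    · rintro ⟨i, hi⟩ ⟨j, hj⟩
      obtain ⟨u, huB, hui⟩ := hi
      obtain ⟨vv, hvB, hvj⟩ := hj
      obtain ⟨p, hp⟩ := exists_walk_of_induce_reach
        ((hBconn w).preconnected ⟨u, huB⟩ ⟨vv, hvB⟩)
      exact claim u vv p hp i j ⟨u, huB, hui⟩ ⟨vv, hvB, hvj⟩ hui hvj
    · obtain ⟨u, huB⟩ := hne w
      obtain ⟨i, hui⟩ := hvc u
      exact ⟨⟨i, u, huB, hui⟩⟩
  · intro i
    show ({w | ∃ u ∈ B w, u ∈ bag i}).ncard ≤ k + 1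
    by_cases hempty : {w | ∃ u ∈ B w, u ∈ bag i} = ∅
    · simp [hempty]
    obtain ⟨w0, hw0⟩ := Set.nonempty_iff_ne_empty.mpr hempty
    obtain ⟨u0, -, -⟩ := hw0
    have key : ∀ w ∈ {w | ∃ u ∈ B w, u ∈ bag i},
        (if h : ∃ u ∈ B w, u ∈ bag i then h.choose else u0) ∈ B w ∧
        (if h : ∃ u ∈ B w, u ∈ bag i then h.choose else u0) ∈ bag i := by
      intro w hw
      have hw' : ∃ u ∈ B w, u ∈ bag i := hw
      rw [dif_pos hw']
      exact hw'.choose_spec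
    refine le_trans (Set.ncard_le_ncard_of_injOn
      (fun w => if h : ∃ u ∈ B w, u ∈ bag i then h.choose else u0)
      (fun w hw => (key w hw).2) ?_ (Set.toFinite _)) (hw i)
    intro w1 hw1 w2 hw2 hfeq
    by_contra hne12
    have m1 := (key w1 hw1).1
    have m2 := (key w2 hw2).1
    simp only at hfeq
    rw [hfeq] at m1
    exact Set.disjoint_left.mp (hdisj w1 w2 hne12) m1 m2

/-- Some tree decomposition achieving `tw` exists. -/
lemma exists_td_tw (G : SimpleGraph V) [Finite V] :
    ∃ (ι : Type) (T : SimpleGraph ι) (bag : ι → Set V),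
      IsTreeDecomp G T bag ∧ ∀ i, (bag i).ncard ≤ tw G + 1 := by
  have hne : (Nat.card V) ∈ {k | ∃ (ι : Type) (T : SimpleGraph ι) (bag : ι → Set V),
      IsTreeDecomp G T bag ∧ ∀ i, (bag i).ncard ≤ k + 1} := by
    refine ⟨Unit, ⊥, fun _ => Set.univ, ⟨?_, ?_, ?_, ?_, ?_⟩, ?_⟩
    · rw [connected_iff]
      exact ⟨fun u v => by rw [Subsingleton.elim u v], ⟨()⟩⟩
    · intro v c hc
      cases c with
      | nil => exact hc.ne_nil rfl
      | cons h p => exact h.elim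
    · exact fun v => ⟨(), trivial⟩
    · exact fun u v _ => ⟨(), trivial, trivial⟩
    · intro v
      rw [connected_iff]
      exact ⟨fun a b => by rw [Subsingleton.elim a b], ⟨⟨(), trivial⟩⟩⟩
    · intro i
      rw [Set.ncard_univ]
      omega
  exact Nat.sInf_mem (Set.nonempty_of_mem hne)

end SafeSep

namespace SafeSep

variable {V : Type} {G : SimpleGraph V}

lemma compSet_subset {S : Set V} {C : (G.induce Sᶜ).ConnectedComponent} :
    compSet G S C ⊆ Sᶜ := fun _ hx => hx.1

lemma compSet_nonempty {S : Set V} (C : (G.induce Sᶜ).ConnectedComponent) :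
    (compSet G S C).Nonempty := by
  obtain ⟨⟨x, hx⟩, hrep⟩ := C.exists_rep
  exact ⟨x, hx, hrep⟩

lemma compSet_disjoint {S : Set V} {C D : (G.induce Sᶜ).ConnectedComponent}
    (hCD : C ≠ D) : Disjoint (compSet G S C) (compSet G S D) := by
  rw [Set.disjoint_left]
  rintro x ⟨hx1, hx2⟩ ⟨hy1, hy2⟩
  exact hCD (hx2 ▸ hy2 ▸ (by rfl))

lemma mem_compSet_self {S : Set V} {x : V} (hx : x ∈ Sᶜ) :
    x ∈ compSet G S ((G.induce Sᶜ).connectedComponentMk ⟨x, hx⟩) := ⟨hx, rfl⟩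

lemma compSet_connected {S : Set V} (C : (G.induce Sᶜ).ConnectedComponent) :
    (G.induce (compSet G S C)).Connected := by
  classical
  rw [connected_iff]
  constructor
  · rintro ⟨x, hx', hxC⟩ ⟨y, hy', hyC⟩
    obtain ⟨w'⟩ := ConnectedComponent.exact (G := G.induce Sᶜ)
      (v := ⟨x, hx'⟩) (w := ⟨y, hy'⟩) (hxC.trans hyC.symm)
    have hsup : ∀ z ∈ (w'.map (valHom G Sᶜ)).support, z ∈ compSet G S C := by
      intro z hz
      rw [Walk.support_map] at hz
      obtain ⟨⟨z', hz'⟩, hzmem, rfl⟩ := List.mem_map.mp hz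
      have : (G.induce Sᶜ).Reachable ⟨x, hx'⟩ ⟨z', hz'⟩ :=
        ⟨w'.takeUntil _ hzmem⟩
      exact ⟨hz', (ConnectedComponent.sound this.symm).trans hxC⟩
    exact reach_induce_of_walk (w'.map (valHom G Sᶜ)) hsup
  · obtain ⟨x, hx⟩ := compSet_nonempty C
    exact ⟨⟨x, hx⟩⟩

lemma pendant_connected {S : Set V} {C : (G.induce Sᶜ).ConnectedComponent}
    {v d0 : V} (hd0 : d0 ∈ compSet G S C) (hadj : G.Adj d0 v) :
    (G.induce ({v} ∪ compSet G S C)).Connected := by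
  rw [connected_iff]
  have hvmem : v ∈ ({v} ∪ compSet G S C : Set V) := Or.inl rfl
  have hreach : ∀ (x : V) (hx : x ∈ ({v} ∪ compSet G S C : Set V)),
      (G.induce ({v} ∪ compSet G S C)).Reachable ⟨x, hx⟩ ⟨v, hvmem⟩ := by
    intro x hx
    rcases hx with hx | hx
    · exact Reachable.refl _ |>.mono (le_refl _) |>.mono (le_refl _) |>.trans
        (by rw [Set.mem_singleton_iff] at hx; subst hx; rfl)
    · have r1 := reach_induce_mono (Set.subset_union_right (s := {v}))
        ((compSet_connected C).preconnected ⟨x, hx⟩ ⟨d0, hd0⟩)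
      have r2 : (G.induce ({v} ∪ compSet G S C)).Adj ⟨d0, Or.inr hd0⟩ ⟨v, hvmem⟩ := hadj
      exact r1.trans r2.reachable
  exact ⟨fun x y => (hreach x.1 x.2).trans (hreach y.1 y.2).symm, ⟨⟨v, hvmem⟩⟩⟩

lemma singleton_connected (x : V) : (G.induce {x}).Connected := by
  rw [connected_iff]
  refine ⟨fun a b => ?_, ⟨⟨x, rfl⟩⟩⟩
  have : a = b := Subtype.ext (a.2.trans b.2.symm)
  rw [this]

/-- From a walk meeting `S` only at `s`, extract a neighbor of `s` in the
component of the start vertex. -/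
lemma neighbor_in_comp {S : Set V} {s a b : V} (ha : a ∈ Sᶜ)
    (p : G.Walk a b) (havoid : ∀ x ∈ p.support, x ∈ S → x = s)
    (hsmem : s ∈ p.support) (hsa : s ≠ a) :
    ∃ (d : V) (hd : d ∈ Sᶜ), G.Adj d s ∧
      (G.induce Sᶜ).connectedComponentMk ⟨d, hd⟩ =
      (G.induce Sᶜ).connectedComponentMk ⟨a, ha⟩ := by
  classical
  set q := p.takeUntil s hsmem with hq
  have hcount : q.support.count s = 1 := p.count_support_takeUntil_eq_one hsmem
  obtain ⟨d, h, q2, hqd⟩ := Walk.exists_eq_cons_of_ne hsa q.reverse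
  have hsupeq : q.support.reverse = s :: q2.support := by
    rw [← Walk.support_reverse, hqd, Walk.support_cons]
  have hnots : s ∉ q2.support := by
    intro hmem
    have h1 : q.support.reverse.count s = 1 := by rw [List.count_reverse, hcount]
    rw [hsupeq, List.count_cons_self] at h1
    have h2 : 0 < q2.support.count s := List.count_pos_iff.mpr hmem
    omega
  have hq2sub : ∀ z ∈ q2.support, z ∈ Sᶜ := by
    intro z hz
    have hzq : z ∈ q.support := by
      rw [← List.mem_reverse, hsupeq]
      exact List.mem_cons_of_mem _ hz
    have hzp : z ∈ p.support := p.support_takeUntil_subset hsmem hzq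
    intro hzS
    exact hnots ((havoid z hzp hzS) ▸ hz)
  have hd : d ∈ Sᶜ := hq2sub d q2.start_mem_support
  refine ⟨d, hd, h.symm, ?_⟩
  exact ConnectedComponent.sound (reach_induce_of_walk q2 hq2sub)

/-- A minimal separator has (at least) two full components. -/
lemma full_components {S : Set V} {a b : V}
    (hsep : Separates G S a b) (hminl : ∀ S' ⊂ S, ¬ Separates G S' a b)
    (hSne : S.Nonempty) :
    ∃ (ha : a ∈ Sᶜ) (hb : b ∈ Sᶜ),
      (G.induce Sᶜ).connectedComponentMk ⟨a, ha⟩ ≠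
        (G.induce Sᶜ).connectedComponentMk ⟨b, hb⟩ ∧
      (∀ s ∈ S, ∃ (d : V) (hd : d ∈ Sᶜ), G.Adj d s ∧
        (G.induce Sᶜ).connectedComponentMk ⟨d, hd⟩ =
        (G.induce Sᶜ).connectedComponentMk ⟨a, ha⟩) ∧
      (∀ s ∈ S, ∃ (d : V) (hd : d ∈ Sᶜ), G.Adj d s ∧
        (G.induce Sᶜ).connectedComponentMk ⟨d, hd⟩ =
        (G.induce Sᶜ).connectedComponentMk ⟨b, hb⟩) := by
  obtain ⟨haS, hbS, hwalks⟩ := hsep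
  refine ⟨haS, hbS, ?_, ?_, ?_⟩
  · intro heq
    obtain ⟨w, hw⟩ := exists_walk_of_induce_reach (ConnectedComponent.exact heq)
    obtain ⟨x, hx1, hx2⟩ := hwalks w
    exact hw x hx1 hx2
  · intro s hsS
    have hss : S \ {s} ⊂ S := Set.sdiff_singleton_ssubset.mpr hsS
    have hnot := hminl _ hss
    rw [Separates] at hnot
    push_neg at hnot
    obtain ⟨p, hp⟩ := hnot (fun h => haS h.1) (fun h => hbS h.1)
    have havoid : ∀ x ∈ p.support, x ∈ S → x = s := by
      intro x hx hxS
      by_contra hne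
      exact hp x hx ⟨hxS, hne⟩
    obtain ⟨x, hx1, hx2⟩ := hwalks p
    have hxs : x = s := havoid x hx1 hx2
    exact neighbor_in_comp haS p havoid (hxs ▸ hx1)
      (fun h => haS (h ▸ hsS))
  · intro s hsS
    have hss : S \ {s} ⊂ S := Set.sdiff_singleton_ssubset.mpr hsS
    have hnot := hminl _ hss
    rw [Separates] at hnot
    push_neg at hnot
    obtain ⟨p, hp⟩ := hnot (fun h => haS h.1) (fun h => hbS h.1)
    have havoid : ∀ x ∈ p.reverse.support, x ∈ S → x = s := by
      intro x hx hxS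
      by_contra hne
      exact hp x (by rw [Walk.support_reverse] at hx; exact List.mem_reverse.mp hx) ⟨hxS, hne⟩
    obtain ⟨x, hx1, hx2⟩ := hwalks p
    have hxs : x = s := by
      by_contra hne
      exact hp x hx1 ⟨hx2, hne⟩
    have hsmem : s ∈ p.reverse.support := by
      rw [Walk.support_reverse]
      exact List.mem_reverse.mpr (hxs ▸ hx1)
    exact neighbor_in_comp hbS p.reverse havoid hsmem (fun h => hbS (h ▸ hsS))

end SafeSep

namespace SafeSep

variable {V : Type} {G : SimpleGraph V}

lemma good_component [Finite V] {S : Set V} {v : V} (hv : v ∈ S)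
    (hac : G.IsClique (S \ {v}))
    {D C : (G.induce Sᶜ).ConnectedComponent} (hDC : D ≠ C)
    (hfull : ∀ s ∈ S, ∃ (d : V) (hd : d ∈ Sᶜ), G.Adj d s ∧
      (G.induce Sᶜ).connectedComponentMk ⟨d, hd⟩ = D) :
    ∃ (ι0 : Type) (T0 : SimpleGraph ι0) (bagC : ι0 → Set V) (r : ι0),
      T0.Connected ∧ T0.IsAcyclic ∧
      (∀ i, bagC i ⊆ compSet G S C ∪ S) ∧
      (∀ u ∈ compSet G S C ∪ S, ∃ i, u ∈ bagC i) ∧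
      (∀ u w : V, u ∈ compSet G S C ∪ S → w ∈ compSet G S C ∪ S → G.Adj u w →
        ∃ i, u ∈ bagC i ∧ w ∈ bagC i) ∧
      (∀ u ∈ compSet G S C ∪ S, (T0.induce {i | u ∈ bagC i}).Connected) ∧
      (∀ i, (bagC i).ncard ≤ tw G + 1) ∧
      S ⊆ bagC r := by
  classical
  set U : Set V := compSet G S C ∪ S with hU
  -- the branch sets
  set B : U → Set V :=
    fun w => if (w : V) = v then {v} ∪ compSet G S D else {(w : V)} with hB
  have hself : ∀ w : U, (w : V) ∈ B w := by
    intro w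
    simp only [hB]
    by_cases h : (w : V) = v
    · rw [if_pos h]; exact Or.inl h
    · rw [if_neg h]; rfl
  have hDnotU : ∀ x ∈ compSet G S D, x ∉ U := by
    rintro x hxD (hxC | hxS)
    · exact Set.disjoint_left.mp (compSet_disjoint hDC) hxD hxC
    · exact (compSet_subset hxD) hxS
  have hminor : IsMinorOf (completedOn G U S) G := by
    refine ⟨B, ?_, ?_, ?_, ?_⟩
    · intro w; exact ⟨w, hself w⟩
    · intro w
      by_cases h : (w : V) = v
      · rw [show B w = {v} ∪ compSet G S D by simp only [hB, if_pos h]]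
        obtain ⟨d, hd, hadj, heq⟩ := hfull v hv
        exact pendant_connected ⟨hd, heq⟩ hadj
      · rw [show B w = {(w : V)} by simp only [hB, if_neg h]]
        exact singleton_connected _
    · intro w1 w2 hne
      have hvne : (w1 : V) ≠ (w2 : V) := fun h => hne (Subtype.ext h)
      simp only [hB]
      by_cases h1 : (w1 : V) = v <;> by_cases h2 : (w2 : V) = v
      · exact absurd (h1.trans h2.symm) hvne
      · rw [if_pos h1, if_neg h2]
        rw [Set.disjoint_right]
        rintro x rfl
        rintro (hx | hx)
        · exact h2 hx
        · exact hDnotU _ hx w2.2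
      · rw [if_neg h1, if_pos h2]
        rw [Set.disjoint_left]
        rintro x rfl
        rintro (hx | hx)
        · exact h1 hx
        · exact hDnotU _ hx w1.2
      · rw [if_neg h1, if_neg h2]
        simp [hvne]
    · rintro w1 w2 ⟨hne, hadj | ⟨h1S, h2S⟩⟩
      · exact ⟨w1, hself w1, w2, hself w2, hadj⟩
      · have hvne : (w1 : V) ≠ (w2 : V) := fun h => hne (Subtype.ext h)
        by_cases h1 : (w1 : V) = v
        · obtain ⟨d, hd, hadj, heq⟩ := hfull w2 h2S
          have hdB : d ∈ B w1 := by
            simp only [hB]; simp only [if_pos h1]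
            exact Or.inr ⟨hd, heq⟩
          exact ⟨d, hdB, w2, hself w2, hadj⟩
        · by_cases h2 : (w2 : V) = v
          · obtain ⟨d, hd, hadj, heq⟩ := hfull w1 h1S
            have hdB : d ∈ B w2 := by
              simp only [hB]; simp only [if_pos h2]
              exact Or.inr ⟨hd, heq⟩
            exact ⟨w1, hself w1, d, hdB, hadj.symm⟩
          · exact ⟨w1, hself w1, w2, hself w2,
              hac ⟨h1S, h1⟩ ⟨h2S, h2⟩ hvne⟩
  obtain ⟨ι0, T0, bag0, hdec, hbound⟩ := exists_td_tw G
  obtain ⟨bag1, hdec1, hbound1⟩ := minor_hasTD _ hminor hdec hbound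
  obtain ⟨hT0conn, hT0acyc, hvc, hec, hsub⟩ := hdec1
  -- the set `S` (as a subset of `U`) is a clique, hence lies in a common bag
  have hSclique : ∀ x : U, (x : V) ∈ S → ∀ y : U, (y : V) ∈ S →
      ∃ i, x ∈ bag1 i ∧ y ∈ bag1 i := by
    intro x hx y hy
    by_cases hxy : x = y
    · obtain ⟨i, hi⟩ := hvc x
      exact ⟨i, hi, hxy ▸ hi⟩
    · exact hec x y ⟨hxy, Or.inr ⟨hx, hy⟩⟩
  obtain ⟨r, hr⟩ := helly hT0conn hT0acyc hsub (Subtype.val ⁻¹' S)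
    (Set.toFinite _) (fun x hx y hy => hSclique x hx y hy)
  refine ⟨ι0, T0, fun i => Subtype.val '' bag1 i, r, hT0conn, hT0acyc,
    ?_, ?_, ?_, ?_, ?_, ?_⟩
  · rintro i x ⟨y, hy, rfl⟩
    exact y.2
  · intro u hu
    obtain ⟨i, hi⟩ := hvc ⟨u, hu⟩
    exact ⟨i, ⟨u, hu⟩, hi, rfl⟩
  · intro u w hu hw hadj
    obtain ⟨i, hi1, hi2⟩ := hec ⟨u, hu⟩ ⟨w, hw⟩
      ⟨fun h => hadj.ne (congrArg Subtype.val h), Or.inl hadj⟩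
    exact ⟨i, ⟨⟨u, hu⟩, hi1, rfl⟩, ⟨⟨w, hw⟩, hi2, rfl⟩⟩
  · intro u hu
    have hseteq : {i | u ∈ Subtype.val '' bag1 i} = {i | (⟨u, hu⟩ : U) ∈ bag1 i} := by
      ext i
      constructor
      · rintro ⟨y, hy, hyval⟩
        rwa [show (⟨u, hu⟩ : U) = y from Subtype.ext hyval.symm]
      · intro h
        exact ⟨⟨u, hu⟩, h, rfl⟩
    rw [hseteq]
    exact hsub ⟨u, hu⟩
  · intro i
    rw [Set.ncard_image_of_injective _ Subtype.val_injective]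
    exact hbound1 i
  · intro s hs
    exact ⟨⟨s, Or.inr hs⟩, hr hs, rfl⟩

end SafeSep

namespace SafeSep

section Glue

variable {κ : Type} {ι : κ → Type} (T : ∀ C, SimpleGraph (ι C)) (r : ∀ C, ι C)

/-- The star-glued tree: a central node `none` joined to the root `r C` of each tree. -/
def glueT : SimpleGraph (Option (Σ C, ι C)) where
  Adj a b :=
    (∃ C, a = none ∧ b = some ⟨C, r C⟩) ∨
    (∃ C, a = some ⟨C, r C⟩ ∧ b = none) ∨
    (∃ C i j, (T C).Adj i j ∧ a = some ⟨C, i⟩ ∧ b = some ⟨C, j⟩)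
  symm := by
    constructor
    rintro a b (⟨C, rfl, rfl⟩ | ⟨C, rfl, rfl⟩ | ⟨C, i, j, h, rfl, rfl⟩)
    · exact Or.inr (Or.inl ⟨C, rfl, rfl⟩)
    · exact Or.inl ⟨C, rfl, rfl⟩
    · exact Or.inr (Or.inr ⟨C, j, i, h.symm, rfl, rfl⟩)
  loopless := by
    constructor
    rintro a (⟨C, rfl, h⟩ | ⟨C, h, rfl⟩ | ⟨C, i, j, h, rfl, h2⟩)
    · exact nomatch h
    · exact nomatch h
    · rw [Option.some.injEq] at h2
      have h3 := (Sigma.mk.inj_iff.mp h2).2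
      exact h.ne (eq_of_heq h3.symm).symm

/-- The canonical hom from a branch tree into the glued tree. -/
def glueHom (C : κ) : T C →g glueT T r :=
  ⟨fun i => some ⟨C, i⟩, fun h => Or.inr (Or.inr ⟨C, _, _, h, rfl, rfl⟩)⟩

lemma glue_adj_iff {a b : Option (Σ C, ι C)} :
    (glueT T r).Adj a b ↔
    ((∃ C, a = none ∧ b = some ⟨C, r C⟩) ∨
    (∃ C, a = some ⟨C, r C⟩ ∧ b = none) ∨
    (∃ C i j, (T C).Adj i j ∧ a = some ⟨C, i⟩ ∧ b = some ⟨C, j⟩)) := Iff.rfl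

lemma glue_connected (hconn : ∀ C, (T C).Connected) : (glueT T r).Connected := by
  rw [connected_iff]
  have hreach : ∀ x : Option (Σ C, ι C), (glueT T r).Reachable x none := by
    rintro (_ | ⟨C, i⟩)
    · exact Reachable.refl _
    · have h1 : (glueT T r).Reachable (some ⟨C, i⟩) (some ⟨C, r C⟩) :=
        ((hconn C).preconnected i (r C)).map (glueHom T r C)
      exact h1.trans (Adj.reachable (Or.inr (Or.inl ⟨C, rfl, rfl⟩)))
  exact ⟨fun x y => (hreach x).trans (hreach y).symm, ⟨none⟩⟩

lemma glue_lift {x y : Option (Σ C, ι C)} (w : (glueT T r).Walk x y) :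
    none ∉ w.support → ∀ {C : κ} {i : ι C}, x = some ⟨C, i⟩ →
    ∃ (j : ι C) (w' : (T C).Walk i j), y = some ⟨C, j⟩ ∧
      w.support = w'.support.map (fun l => some (⟨C, l⟩ : Σ C, ι C)) ∧
      w.edges = w'.edges.map (Sym2.map (fun l => some (⟨C, l⟩ : Σ C, ι C))) := by
  induction w with
  | nil =>
    rintro hn C i rfl
    exact ⟨i, Walk.nil, rfl, by simp, by simp⟩
  | @cons a b y h p ih =>
    rintro hn C i rfl
    have hnp : none ∉ p.support := fun hh => hn (by
      rw [Walk.support_cons]; exact List.mem_cons_of_mem _ hh)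
    rcases h with ⟨C0, h1, h2⟩ | ⟨C0, h1, h2⟩ | ⟨C0, i0, j0, hadj, h1, h2⟩
    · exact absurd h1 (by simp)
    · exact absurd (h2 ▸ p.start_mem_support) hnp
    · rw [Option.some.injEq] at h1
      obtain ⟨hC, hi⟩ := Sigma.mk.inj_iff.mp h1
      subst hC
      have hi' : i = i0 := eq_of_heq hi
      subst hi'
      obtain ⟨j, w', rfl, hsup, hedg⟩ := ih hnp h2
      refine ⟨j, Walk.cons hadj w', rfl, ?_, ?_⟩
      · exact congrArg (some ⟨C, i⟩ :: ·) hsup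
      · exact (show _ = s(some ⟨C, i⟩, b) :: p.edges from rfl).trans (by rw [hedg, h2, Walk.edges_cons, List.map_cons, Sym2.map_pair_eq])

lemma glue_acyclic (hacyc : ∀ C, (T C).IsAcyclic) : (glueT T r).IsAcyclic := by
  intro x c hc
  by_cases hnone : none ∈ c.support
  · -- rotate to start at `none`
    classical
    have hc' := hc.rotate hnone
    set c' := c.rotate none hnone with hc'def
    clear_value c'
    clear hc hc'def hnone
    revert hc'
    cases c' with
    | nil => intro hc'; exact hc'.ne_nil rfl
    | cons h rest =>
      intro hc'
      have hrestnodup : rest.support.Nodup := by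
        have := hc'.support_nodup
        rwa [Walk.support_cons, List.tail_cons] at this
      have htrail := hc'.isTrail.edges_nodup
      rw [Walk.edges_cons] at htrail
      obtain ⟨C1, -, hb⟩ | ⟨C1, h1, -⟩ | ⟨C1, i, j, -, h1, -⟩ := h
      rotate_left
      · exact nomatch h1
      · exact nomatch h1
      subst hb
      -- decompose `rest` from its other end
      obtain ⟨b2, h2, tail, hrev⟩ := Walk.exists_eq_cons_of_ne
        (by simp : (none : Option (Σ C, ι C)) ≠ some ⟨C1, r C1⟩) rest.reverse
      obtain ⟨C2, -, hb2⟩ | ⟨C2, h1, -⟩ | ⟨C2, i, j, -, h1, -⟩ := (glue_adj_iff T r).mp h2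
      rotate_left
      · exact nomatch h1
      · exact nomatch h1
      subst hb2
      have hnonetail : none ∉ tail.support := by
        have hs : rest.reverse.support = none :: tail.support := by
          rw [hrev, Walk.support_cons]
        have : rest.reverse.support.Nodup := by
          rw [Walk.support_reverse]; exact List.nodup_reverse.mpr hrestnodup
        rw [hs] at this
        exact (List.nodup_cons.mp this).1
      obtain ⟨j, w', heq, -, -⟩ := glue_lift T r tail hnonetail rfl
      -- heq : some ⟨C1, r C1⟩ = some ⟨C2, j⟩  (endpoint of tail)
      rw [Option.some.injEq] at heq
      obtain ⟨hC, -⟩ := Sigma.mk.inj_iff.mp heq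
      subst hC
      -- the first edge equals the last edge: contradiction with trail property
      have hmem : s(none, some (⟨C1, r C1⟩ : Σ C, ι C)) ∈ rest.edges := by
        have : s(none, some (⟨C1, r C1⟩ : Σ C, ι C)) ∈ rest.reverse.edges := by
          rw [hrev, Walk.edges_cons]
          exact List.mem_cons_self
        rwa [Walk.edges_reverse, List.mem_reverse] at this
      exact (List.nodup_cons.mp htrail).1 hmem
  · -- the cycle avoids `none`: it lives in a single branch
    have hxnone : x ≠ none := fun hh => hnone (hh ▸ c.start_mem_support)
    obtain ⟨⟨C, i⟩, rfl⟩ := Option.ne_none_iff_exists'.mp hxnone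
    obtain ⟨j, w', hj, hsup, hedg⟩ := glue_lift T r c hnone rfl
    rw [Option.some.injEq] at hj
    obtain ⟨-, hi⟩ := Sigma.mk.inj_iff.mp hj
    have hij : i = j := eq_of_heq hi
    subst hij
    refine hacyc C w' ?_
    rw [Walk.isCycle_def]
    refine ⟨⟨?_⟩, ?_, ?_⟩
    · exact List.Nodup.of_map _ (hedg ▸ hc.isTrail.edges_nodup)
    · intro hnil
      have h3 := hc.three_le_length
      rw [← Walk.length_edges, hedg, List.length_map, Walk.length_edges, hnil] at h3
      simp at h3
    · have := hc.support_nodup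
      rw [hsup, ← List.map_tail] at this
      exact List.Nodup.of_map _ this

end Glue

end SafeSep


open SafeSep

/-- Bodlaender–Koster: a minimal separator `S` that is an
almost-clique is safe: `G` has a tree-decomposition of width `tw G` inducing `S`
as the intersection of two adjacent bags. -/
theorem stmt16 {V : Type} [Finite V] (G : SimpleGraph V) (S : Set V)
    (hmin : IsMinSeparator G S) (v : V) (hv : v ∈ S) (hac : G.IsClique (S \ {v})) :
    ∃ (ι : Type) (T : SimpleGraph ι) (bag : ι → Set V),
      IsTreeDecomp G T bag ∧ (∀ i, (bag i).ncard ≤ tw G + 1) ∧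
      ∃ i j, T.Adj i j ∧ bag i ∩ bag j = S := by
  classical
  obtain ⟨a, b, hsep, hminl⟩ := hmin
  obtain ⟨ha, hb, hab, hfa, hfb⟩ := full_components hsep hminl ⟨v, hv⟩
  set Ca := (G.induce Sᶜ).connectedComponentMk ⟨a, ha⟩ with hCadef
  set Cb := (G.induce Sᶜ).connectedComponentMk ⟨b, hb⟩ with hCbdef
  have hgood : ∀ C : (G.induce Sᶜ).ConnectedComponent,
      ∃ (ι0 : Type) (T0 : SimpleGraph ι0) (bagC : ι0 → Set V) (r : ι0),
        T0.Connected ∧ T0.IsAcyclic ∧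
        (∀ i, bagC i ⊆ compSet G S C ∪ S) ∧
        (∀ u ∈ compSet G S C ∪ S, ∃ i, u ∈ bagC i) ∧
        (∀ u w : V, u ∈ compSet G S C ∪ S → w ∈ compSet G S C ∪ S → G.Adj u w →
          ∃ i, u ∈ bagC i ∧ w ∈ bagC i) ∧
        (∀ u ∈ compSet G S C ∪ S, (T0.induce {i | u ∈ bagC i}).Connected) ∧
        (∀ i, (bagC i).ncard ≤ tw G + 1) ∧
        S ⊆ bagC r := by
    intro C
    by_cases hCeq : C = Ca
    · refine good_component hv hac (D := Cb) ?_ hfb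
      rw [hCeq]; exact Ne.symm hab
    · exact good_component hv hac (D := Ca) (fun h => hCeq h.symm) hfa
  let ιf := fun C => (hgood C).choose
  let Tf : ∀ C, SimpleGraph (ιf C) := fun C => (hgood C).choose_spec.choose
  let bagf : ∀ C, ιf C → Set V := fun C => (hgood C).choose_spec.choose_spec.choose
  let rf : ∀ C, ιf C := fun C => (hgood C).choose_spec.choose_spec.choose_spec.choose
  have hspec := fun C => (hgood C).choose_spec.choose_spec.choose_spec.choose_spec
  have hconn : ∀ C, (Tf C).Connected := fun C => (hspec C).1
  have hacy : ∀ C, (Tf C).IsAcyclic := fun C => (hspec C).2.1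
  have hbsub : ∀ C, ∀ i, bagf C i ⊆ compSet G S C ∪ S := fun C => (hspec C).2.2.1
  have hvcov := fun C => (hspec C).2.2.2.1
  have hecov := fun C => (hspec C).2.2.2.2.1
  have hsubc := fun C => (hspec C).2.2.2.2.2.1
  have hbound := fun C => (hspec C).2.2.2.2.2.2.1
  have hSr : ∀ C, S ⊆ bagf C (rf C) := fun C => (hspec C).2.2.2.2.2.2.2
  refine ⟨Option (Σ C, ιf C), glueT Tf rf,
    fun o => Option.elim o S (fun x => bagf x.1 x.2), ⟨?_, ?_, ?_, ?_, ?_⟩, ?_, ?_⟩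
  · exact glue_connected Tf rf hconn
  · exact glue_acyclic Tf rf hacy
  · -- vertex cover
    intro u
    by_cases huS : u ∈ S
    · exact ⟨none, huS⟩
    · have hu' : u ∈ Sᶜ := huS
      obtain ⟨i, hi⟩ := hvcov _ u (Or.inl (mem_compSet_self hu'))
      exact ⟨some ⟨_, i⟩, hi⟩
  · -- edge cover
    intro u w hadj
    by_cases huS : u ∈ S <;> by_cases hwS : w ∈ S
    · exact ⟨none, huS, hwS⟩
    · have hw' : w ∈ Sᶜ := hwS
      obtain ⟨i, h1, h2⟩ := hecov ((G.induce Sᶜ).connectedComponentMk ⟨w, hw'⟩) u w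
        (Or.inr huS) (Or.inl (mem_compSet_self hw')) hadj
      exact ⟨some ⟨_, i⟩, h1, h2⟩
    · have hu' : u ∈ Sᶜ := huS
      obtain ⟨i, h1, h2⟩ := hecov ((G.induce Sᶜ).connectedComponentMk ⟨u, hu'⟩) u w
        (Or.inl (mem_compSet_self hu')) (Or.inr hwS) hadj
      exact ⟨some ⟨_, i⟩, h1, h2⟩
    · have hu' : u ∈ Sᶜ := huS
      have hw' : w ∈ Sᶜ := hwS
      have hcc : (G.induce Sᶜ).connectedComponentMk ⟨w, hw'⟩ =
          (G.induce Sᶜ).connectedComponentMk ⟨u, hu'⟩ :=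
        (ConnectedComponent.sound
          (show (G.induce Sᶜ).Adj ⟨u, hu'⟩ ⟨w, hw'⟩ from hadj).reachable).symm
      obtain ⟨i, h1, h2⟩ := hecov ((G.induce Sᶜ).connectedComponentMk ⟨u, hu'⟩) u w
        (Or.inl (mem_compSet_self hu')) (Or.inl ⟨hw', hcc⟩) hadj
      exact ⟨some ⟨_, i⟩, h1, h2⟩
  · -- connectivity of the subtree of each vertex
    intro u
    by_cases huS : u ∈ S
    · rw [connected_iff]
      refine ⟨?_, ⟨⟨none, huS⟩⟩⟩
      have hreach : ∀ (o : Option (Σ C, ιf C))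
          (ho : o ∈ {o : Option (Σ C, ιf C) |
            u ∈ Option.elim o S (fun x => bagf x.1 x.2)}),
          ((glueT Tf rf).induce {o : Option (Σ C, ιf C) |
            u ∈ Option.elim o S (fun x => bagf x.1 x.2)}).Reachable ⟨o, ho⟩ ⟨none, huS⟩ := by
        rintro (_ | ⟨C, i⟩) ho
        · exact Reachable.refl _
        · have r0 := (hsubc C u (Or.inr huS)).preconnected ⟨i, ho⟩ ⟨rf C, hSr C huS⟩
          let g : (Tf C).induce {i | u ∈ bagf C i} →g
              (glueT Tf rf).induce {o : Option (Σ C, ιf C) |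
                u ∈ Option.elim o S (fun x => bagf x.1 x.2)} :=
            ⟨fun p => ⟨some ⟨C, p.1⟩, p.2⟩,
             fun {p q} hpq => Or.inr (Or.inr ⟨C, p.1, q.1, hpq, rfl, rfl⟩)⟩
          refine (r0.map g).trans (Adj.reachable ?_)
          exact Or.inr (Or.inl ⟨C, rfl, rfl⟩)
      intro x y
      exact (hreach x.1 x.2).trans (hreach y.1 y.2).symm
    · have hu' : u ∈ Sᶜ := huS
      rw [connected_iff]
      have hchar : ∀ (o : Option (Σ C, ιf C)),
          u ∈ Option.elim o S (fun x => bagf x.1 x.2) →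
          ∃ i : ιf ((G.induce Sᶜ).connectedComponentMk ⟨u, hu'⟩),
            o = some ⟨(G.induce Sᶜ).connectedComponentMk ⟨u, hu'⟩, i⟩ ∧
            u ∈ bagf ((G.induce Sᶜ).connectedComponentMk ⟨u, hu'⟩) i := by
        rintro (_ | ⟨C, i⟩) ho
        · exact absurd ho huS
        · rcases hbsub C i ho with hcs | hS
          · obtain ⟨hu2, heq⟩ := hcs
            have hCeq : C = (G.induce Sᶜ).connectedComponentMk ⟨u, hu'⟩ := by
              rw [← heq]
            subst hCeq
            exact ⟨i, rfl, ho⟩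
          · exact absurd hS huS
      refine ⟨?_, ?_⟩
      · rintro ⟨o1, ho1⟩ ⟨o2, ho2⟩
        obtain ⟨i1, rfl, hm1⟩ := hchar o1 ho1
        obtain ⟨i2, rfl, hm2⟩ := hchar o2 ho2
        have r0 := (hsubc _ u (Or.inl (mem_compSet_self hu'))).preconnected
          ⟨i1, hm1⟩ ⟨i2, hm2⟩
        let g : (Tf ((G.induce Sᶜ).connectedComponentMk ⟨u, hu'⟩)).induce
            {i | u ∈ bagf ((G.induce Sᶜ).connectedComponentMk ⟨u, hu'⟩) i} →g
            (glueT Tf rf).induce {o : Option (Σ C, ιf C) |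
              u ∈ Option.elim o S (fun x => bagf x.1 x.2)} :=
          ⟨fun p => ⟨some ⟨_, p.1⟩, p.2⟩,
           fun {p q} hpq => Or.inr (Or.inr ⟨_, p.1, q.1, hpq, rfl, rfl⟩)⟩
        exact r0.map g
      · obtain ⟨i0, hi0⟩ := hvcov _ u (Or.inl (mem_compSet_self hu'))
        exact ⟨⟨some ⟨_, i0⟩, hi0⟩⟩
  · -- width bound
    rintro (_ | ⟨C, i⟩)
    · exact le_trans (Set.ncard_le_ncard (hSr Ca) (Set.toFinite _)) (hbound Ca (rf Ca))
    · exact hbound C i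
  · refine ⟨some ⟨Ca, rf Ca⟩, none, Or.inr (Or.inl ⟨Ca, rfl, rfl⟩), ?_⟩
    exact Set.inter_eq_right.mpr (hSr Ca)
end
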